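/- arXiv:1706.01587 — 3 statements merged into one kernel-verified Lean document; each statement's English description precedes it below -/
import Mathlib

section
/- Let M ∈ ℝ^{n×n} be symmetric positive semidefinite with largest eigenvalue λ₁ and corresponding unit eigenvector v₁, let c > 0 and γ₂ > 0. Consider f(l) = (lᵀ M l + c)⁻¹ + γ₂ ‖l‖². If λ₁ ≤ γ₂ c², then l = 0 is a global minimizer of f; otherwise, l* = √(1/√(γ₂ λ₁) − c/λ₁) · v₁ is a global minimizer of f. -/
open Matrix

set_option maxHeartbeats 1600000 in
/-- global minimizers of `f(l) = (lᵀMl + c)⁻¹ + γ₂‖l‖²`. -/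
theorem stmt_7 {n : ℕ} (M : Matrix (Fin n) (Fin n) ℝ) (hM : M.PosSemidef)
    (c γ₂ : ℝ) (hc : 0 < c) (hγ₂ : 0 < γ₂)
    (lam1 : ℝ) (v₁ : Fin n → ℝ) (hv₁ : v₁ ⬝ᵥ v₁ = 1)
    (heig : M.mulVec v₁ = lam1 • v₁)
    (hlam1 : ∀ (μ : ℝ) (x : Fin n → ℝ), x ≠ 0 → M.mulVec x = μ • x → μ ≤ lam1)
    (f : (Fin n → ℝ) → ℝ)
    (hf : ∀ l, f l = (l ⬝ᵥ M.mulVec l + c)⁻¹ + γ₂ * (l ⬝ᵥ l)) :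
    (lam1 ≤ γ₂ * c ^ 2 → ∀ l, f 0 ≤ f l) ∧
      (γ₂ * c ^ 2 < lam1 →
        ∀ l, f (Real.sqrt (1 / Real.sqrt (γ₂ * lam1) - c / lam1) • v₁) ≤ f l) := by
  -- basic positivity facts
  have hqnn : ∀ l : Fin n → ℝ, 0 ≤ l ⬝ᵥ M.mulVec l := by
    intro l; simpa using hM.dotProduct_mulVec_nonneg l
  have htnn : ∀ l : Fin n → ℝ, 0 ≤ l ⬝ᵥ l := by
    intro l
    exact Finset.sum_nonneg fun i _ => mul_self_nonneg _
  -- Rayleigh bound : lᵀ M l ≤ lam1 * ‖l‖²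
  have hray : ∀ l : Fin n → ℝ, l ⬝ᵥ M.mulVec l ≤ lam1 * (l ⬝ᵥ l) := by
    set N : Matrix (Fin n) (Fin n) ℝ := lam1 • (1 : Matrix (Fin n) (Fin n) ℝ) - M with hN
    have hNh : N.IsHermitian := by
      unfold Matrix.IsHermitian
      rw [hN, Matrix.conjTranspose_sub, Matrix.conjTranspose_smul, hM.1,
        Matrix.conjTranspose_one, star_trivial]
    have hEig : ∀ i, 0 ≤ hNh.eigenvalues i := by
      intro i
      set b : Fin n → ℝ := ⇑(hNh.eigenvectorBasis i) with hbdef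
      have hb : N *ᵥ b = hNh.eigenvalues i • b := hNh.mulVec_eigenvectorBasis i
      have hbne : b ≠ 0 := by
        have h0 : hNh.eigenvectorBasis i ≠ 0 :=
          hNh.eigenvectorBasis.orthonormal.ne_zero i
        intro h
        exact h0 (by ext j; exact congrFun h j)
      have hMb : M *ᵥ b = (lam1 - hNh.eigenvalues i) • b := by
        have hexp : N *ᵥ b = lam1 • b - M *ᵥ b := by
          simp [hN, Matrix.sub_mulVec, Matrix.smul_mulVec, Matrix.one_mulVec]
        rw [hexp] at hb
        have : M *ᵥ b = lam1 • b - hNh.eigenvalues i • b := by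
          rw [← hb]; abel
        rw [this, ← sub_smul]
      have := hlam1 _ b hbne hMb
      linarith
    have hNpsd := hNh.posSemidef_iff_eigenvalues_nonneg.mpr hEig
    intro l
    have h0 := hNpsd.dotProduct_mulVec_nonneg l
    simp only [star_trivial, hN, Matrix.sub_mulVec, Matrix.smul_mulVec,
      Matrix.one_mulVec, dotProduct_sub, dotProduct_smul, smul_eq_mul] at h0
    linarith
  have hlam1nn : 0 ≤ lam1 := by
    have h1 : v₁ ⬝ᵥ M.mulVec v₁ = lam1 := by
      rw [heig, dotProduct_smul, smul_eq_mul, hv₁, mul_one]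
    have := hqnn v₁; linarith
  constructor
  · -- case lam1 ≤ γ₂ c²
    intro hle l
    rw [hf, hf]
    have h0 : (0 : Fin n → ℝ) ⬝ᵥ M.mulVec 0 = 0 := by simp
    have h0' : (0 : Fin n → ℝ) ⬝ᵥ (0 : Fin n → ℝ) = 0 := by simp
    rw [h0, h0', zero_add, mul_zero, add_zero]
    set q := l ⬝ᵥ M.mulVec l with hq
    set t := l ⬝ᵥ l with ht
    have hq0 : 0 ≤ q := hqnn l
    have ht0 : 0 ≤ t := htnn l
    have hqt : q ≤ lam1 * t := hray l
    have huc : (0:ℝ) < q + c := by linarith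
    have hsub : c⁻¹ - (q + c)⁻¹ = q / (c * (q + c)) := by
      field_simp; ring
    have hdiv : q / (c * (q + c)) ≤ γ₂ * t := by
      rw [div_le_iff₀ (by positivity)]
      have : q ≤ γ₂ * c ^ 2 * t := le_trans hqt (by nlinarith)
      nlinarith
    linarith
  · -- case γ₂ c² < lam1
    intro hlt l
    have hlam1pos : 0 < lam1 := lt_trans (by positivity) hlt
    set r := Real.sqrt (γ₂ * lam1) with hrdef
    have hr2 : r * r = γ₂ * lam1 := Real.mul_self_sqrt (by positivity)
    have hrpos : 0 < r := Real.sqrt_pos.mpr (by positivity)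
    set s := 1 / r - c / lam1 with hsdef
    have hspos : 0 < s := by
      have hrc : r * c < lam1 := by
        have h2 : (r * c) ^ 2 < lam1 ^ 2 := by nlinarith
        exact lt_of_pow_lt_pow_left₀ 2 hlam1pos.le h2
      rw [hsdef, sub_pos, div_lt_div_iff₀ hlam1pos hrpos]
      linarith
    set lstar : Fin n → ℝ := Real.sqrt s • v₁ with hlstar
    have hss : Real.sqrt s * Real.sqrt s = s := Real.mul_self_sqrt hspos.le
    have hqstar : lstar ⬝ᵥ M.mulVec lstar = s * lam1 := by
      rw [hlstar, Matrix.mulVec_smul, heig, smul_smul, dotProduct_smul,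
        smul_dotProduct, smul_eq_mul, smul_eq_mul, hv₁, mul_one]
      linear_combination lam1 * hss
    have htstar : lstar ⬝ᵥ lstar = s := by
      rw [hlstar, dotProduct_smul, smul_dotProduct, smul_eq_mul, smul_eq_mul,
        hv₁, mul_one]
      exact hss
    rw [hf, hf, hqstar, htstar]
    -- value at lstar equals 2r/lam1 - γ₂ c / lam1
    have he1 : s * lam1 + c = lam1 / r := by
      rw [hsdef]; field_simp; ring
    have he2 : γ₂ / r = r / lam1 := by
      rw [div_eq_div_iff hrpos.ne' hlam1pos.ne']; linarith [hr2]
    have hval : (s * lam1 + c)⁻¹ + γ₂ * s = 2 * r / lam1 - γ₂ * c / lam1 := by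
      rw [he1, inv_div, hsdef]
      have : γ₂ * (1 / r - c / lam1) = γ₂ / r - γ₂ * c / lam1 := by ring
      rw [this, he2]; ring
    rw [hval]
    -- lower bound for the general value
    set q := l ⬝ᵥ M.mulVec l with hq
    set t := l ⬝ᵥ l with ht
    have hq0 : 0 ≤ q := hqnn l
    have ht0 : 0 ≤ t := htnn l
    have hqt : q ≤ lam1 * t := hray l
    set u := q + c with hu
    have hupos : (0:ℝ) < u := by rw [hu]; linarith
    have hkey : 2 * r * u ≤ lam1 + γ₂ * u ^ 2 := by
      nlinarith [sq_nonneg (γ₂ * u - r), hγ₂, hr2]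
    have hfrac : u⁻¹ + γ₂ * u / lam1 - 2 * r / lam1 =
        (lam1 + γ₂ * u ^ 2 - 2 * r * u) / (lam1 * u) := by
      field_simp
    have hge : 2 * r / lam1 ≤ u⁻¹ + γ₂ * u / lam1 := by
      have hnn : 0 ≤ (lam1 + γ₂ * u ^ 2 - 2 * r * u) / (lam1 * u) :=
        div_nonneg (by linarith) (by positivity)
      linarith [hnn, hfrac]
    have hlarge : γ₂ * u / lam1 ≤ γ₂ * t + γ₂ * c / lam1 := by
      have h2 : γ₂ * u / lam1 = γ₂ * q / lam1 + γ₂ * c / lam1 := by rw [hu]; ring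
      have h3 : γ₂ * q / lam1 ≤ γ₂ * t := by
        rw [div_le_iff₀ hlam1pos]
        nlinarith
      linarith
    calc 2 * r / lam1 - γ₂ * c / lam1 ≤ u⁻¹ + γ₂ * u / lam1 - γ₂ * c / lam1 := by linarith
      _ ≤ u⁻¹ + γ₂ * t := by linarith
      _ = (q + c)⁻¹ + γ₂ * t := by rw [hu]
end

section
/- Let R ∈ ℝ^{N×n}, b > 0, ε > 0, and let w ∈ ℝᴺ have i.i.d. Laplace(0, b) entries with b ≥ sup{‖R h − R h'‖₁ / ε : h, h' ∈ H, ‖h − h'‖₀ ≤ 1}, where H ⊆ ℝⁿ is compact. Suppose y = R h + w + e for a random vector e independent of w. Then for all Lebesgue-measurable Y ⊆ ℝᴺ and all h, h' ∈ H differing in at most one coordinate, P(y ∈ Y | h) ≤ exp(ε) · P(y ∈ Y | h'), i.e., the mechanism is ε-differentially private. -/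
open Matrix MeasureTheory ProbabilityTheory

lemma stmt10_pointwise {N : ℕ} {b ε : ℝ} (hb : 0 < b) (Δ : Fin N → ℝ)
    (hΔ : ∑ i, |Δ i| ≤ b * ε) (x : Fin N → ℝ) :
    ∏ i, (2 * b)⁻¹ * Real.exp (-|x i + Δ i| / b) ≤
      Real.exp ε * ∏ i, (2 * b)⁻¹ * Real.exp (-|x i| / b) := by
  have key : ∀ i : Fin N, (2 * b)⁻¹ * Real.exp (-|x i + Δ i| / b) ≤
      Real.exp (|Δ i| / b) * ((2 * b)⁻¹ * Real.exp (-|x i| / b)) := by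
    intro i
    have habs : |x i| ≤ |x i + Δ i| + |Δ i| := by
      have := abs_add_le (x i + Δ i) (-Δ i)
      simpa using this
    have h1 : -|x i + Δ i| / b ≤ |Δ i| / b + -|x i| / b := by
      rw [← add_div]
      gcongr
      linarith
    have h2 : Real.exp (-|x i + Δ i| / b) ≤ Real.exp (|Δ i| / b) * Real.exp (-|x i| / b) := by
      rw [← Real.exp_add]
      exact Real.exp_le_exp.mpr h1
    have hpos : (0:ℝ) ≤ (2 * b)⁻¹ := by positivity
    calc (2 * b)⁻¹ * Real.exp (-|x i + Δ i| / b)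
        ≤ (2 * b)⁻¹ * (Real.exp (|Δ i| / b) * Real.exp (-|x i| / b)) :=
          mul_le_mul_of_nonneg_left h2 hpos
      _ = Real.exp (|Δ i| / b) * ((2 * b)⁻¹ * Real.exp (-|x i| / b)) := by ring
  calc ∏ i, (2 * b)⁻¹ * Real.exp (-|x i + Δ i| / b)
      ≤ ∏ i, Real.exp (|Δ i| / b) * ((2 * b)⁻¹ * Real.exp (-|x i| / b)) :=
        Finset.prod_le_prod (fun i _ => by positivity) (fun i _ => key i)
    _ = (∏ i, Real.exp (|Δ i| / b)) * ∏ i, (2 * b)⁻¹ * Real.exp (-|x i| / b) :=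
        Finset.prod_mul_distrib
    _ ≤ Real.exp ε * ∏ i, (2 * b)⁻¹ * Real.exp (-|x i| / b) := by
        apply mul_le_mul_of_nonneg_right _ (Finset.prod_nonneg fun i _ => by positivity)
        rw [← Real.exp_sum]
        apply Real.exp_le_exp.mpr
        rw [← Finset.sum_div]
        rw [div_le_iff₀ hb]
        linarith [hΔ]

lemma stmt10_key {N : ℕ} {b ε : ℝ} (hb : 0 < b) (hε : 0 < ε) (c c' : Fin N → ℝ)
    (hΔ : ∑ i, |c' i - c i| ≤ b * ε)
    (Y : Set (Fin N → ℝ)) (hY : MeasurableSet Y) :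
    (volume.withDensity
        (fun x : Fin N → ℝ => ENNReal.ofReal (∏ i, (2 * b)⁻¹ * Real.exp (-|x i| / b))))
      {x | c + x ∈ Y} ≤
    ENNReal.ofReal (Real.exp ε) *
    (volume.withDensity
        (fun x : Fin N → ℝ => ENNReal.ofReal (∏ i, (2 * b)⁻¹ * Real.exp (-|x i| / b))))
      {x | c' + x ∈ Y} := by
  set f : (Fin N → ℝ) → ENNReal :=
    fun x => ENNReal.ofReal (∏ i, (2 * b)⁻¹ * Real.exp (-|x i| / b)) with hf
  set Δ : Fin N → ℝ := c' - c with hΔdef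
  have hcΔ : c + Δ = c' := by simp [hΔdef]
  have hS : MeasurableSet {x : Fin N → ℝ | c + x ∈ Y} :=
    hY.preimage (measurable_const_add c)
  have hS' : MeasurableSet {x : Fin N → ℝ | c' + x ∈ Y} :=
    hY.preimage (measurable_const_add c')
  rw [withDensity_apply f hS, withDensity_apply f hS']
  rw [← lintegral_indicator hS, ← lintegral_indicator hS']
  have htrans : ∫⁻ x, Set.indicator {x : Fin N → ℝ | c + x ∈ Y} f (x + Δ)
      = ∫⁻ x, Set.indicator {x : Fin N → ℝ | c + x ∈ Y} f x :=
    lintegral_add_right_eq_self (Set.indicator {x : Fin N → ℝ | c + x ∈ Y} f) Δ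
  rw [← htrans, ← lintegral_const_mul' _ _ ENNReal.ofReal_ne_top]
  apply lintegral_mono
  intro x
  dsimp only
  have hmem : (x + Δ ∈ {x : Fin N → ℝ | c + x ∈ Y}) ↔ x ∈ {x : Fin N → ℝ | c' + x ∈ Y} := by
    simp only [Set.mem_setOf_eq]
    rw [show c + (x + Δ) = c' + x by rw [← hcΔ]; abel]
  by_cases hx : x ∈ {x : Fin N → ℝ | c' + x ∈ Y}
  · rw [Set.indicator_of_mem (hmem.mpr hx), Set.indicator_of_mem hx]
    have hpt := stmt10_pointwise hb Δ (by simpa [hΔdef] using hΔ) x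
    calc f (x + Δ) = ENNReal.ofReal (∏ i, (2 * b)⁻¹ * Real.exp (-|x i + Δ i| / b)) := rfl
      _ ≤ ENNReal.ofReal (Real.exp ε * ∏ i, (2 * b)⁻¹ * Real.exp (-|x i| / b)) :=
          ENNReal.ofReal_le_ofReal hpt
      _ = ENNReal.ofReal (Real.exp ε) * f x := by
          rw [ENNReal.ofReal_mul (Real.exp_nonneg ε)]
  · rw [Set.indicator_of_notMem (fun hmem' => hx (hmem.mp hmem')),
      Set.indicator_of_notMem hx]
    simp

/-- the Laplace output-noise mechanism is ε-differentially private. -/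
theorem stmt_10 {N n : ℕ} (hn : 0 < n) (R : Matrix (Fin N) (Fin n) ℝ)
    (b ε : ℝ) (hb : 0 < b) (hε : 0 < ε)
    (H : Set (Fin n → ℝ)) (hH : IsCompact H)
    (hbsup : ∀ h h', h ∈ H → h' ∈ H → (∃ j, ∀ i, i ≠ j → h i = h' i) →
      (∑ i, |R.mulVec h i - R.mulVec h' i|) / ε ≤ b)
    {Ω : Type*} [MeasurableSpace Ω] (μ : Measure Ω) [IsProbabilityMeasure μ]
    (w e : Ω → Fin N → ℝ) (hwmeas : Measurable w) (hemeas : Measurable e)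
    (hindep : IndepFun w e μ)
    (hwlaw : Measure.map w μ =
      volume.withDensity
        (fun x : Fin N → ℝ => ENNReal.ofReal (∏ i, (2 * b)⁻¹ * Real.exp (-|x i| / b)))) :
    ∀ (Y : Set (Fin N → ℝ)), MeasurableSet Y →
      ∀ h h', h ∈ H → h' ∈ H → (∃ j, ∀ i, i ≠ j → h i = h' i) →
        μ {ω | R.mulVec h + w ω + e ω ∈ Y} ≤
          ENNReal.ofReal (Real.exp ε) * μ {ω | R.mulVec h' + w ω + e ω ∈ Y} := by
  intro Y hY h h' hh hh' hdiff
  set ν : Measure (Fin N → ℝ) := volume.withDensity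
      (fun x : Fin N → ℝ => ENNReal.ofReal (∏ i, (2 * b)⁻¹ * Real.exp (-|x i| / b))) with hν
  -- representation of the probability as an integral over the law of e
  have hmap : μ.map (fun ω => (e ω, w ω)) = (μ.map e).prod (μ.map w) :=
    (indepFun_iff_map_prod_eq_prod_map_map hemeas.aemeasurable hwmeas.aemeasurable).mp
      hindep.symm
  have hrep : ∀ a : Fin N → ℝ, μ {ω | a + w ω + e ω ∈ Y}
      = ∫⁻ v, ν {x | (a + v) + x ∈ Y} ∂(μ.map e) := by
    intro a
    set s : Set ((Fin N → ℝ) × (Fin N → ℝ)) := {q | a + q.2 + q.1 ∈ Y} with hs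
    have hsm : MeasurableSet s :=
      hY.preimage ((measurable_const.add measurable_snd).add measurable_fst)
    have h1 : μ {ω | a + w ω + e ω ∈ Y} = μ.map (fun ω => (e ω, w ω)) s := by
      rw [Measure.map_apply (hemeas.prodMk hwmeas) hsm]
      rfl
    rw [h1, hmap, Measure.prod_apply hsm]
    refine lintegral_congr fun v => ?_
    rw [hwlaw]
    congr 1
    ext x
    simp only [hs, Set.mem_preimage, Set.mem_setOf_eq]
    rw [show a + x + v = (a + v) + x by abel]
  rw [hrep (R.mulVec h), hrep (R.mulVec h'),
    ← lintegral_const_mul' _ _ ENNReal.ofReal_ne_top]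
  apply lintegral_mono
  intro v
  apply stmt10_key hb hε
  · have hsum := hbsup h h' hh hh' hdiff
    rw [div_le_iff₀ hε] at hsum
    calc ∑ i, |(R.mulVec h' + v) i - (R.mulVec h + v) i|
        = ∑ i, |R.mulVec h i - R.mulVec h' i| := by
          refine Finset.sum_congr rfl fun i _ => ?_
          simp only [Pi.add_apply]
          rw [abs_sub_comm]
          ring_nf
      _ ≤ b * ε := hsum
  · exact hY
end

section
/- Let w ∈ ℝᴺ have i.i.d. Laplace(0, b) entries with density (2b)⁻¹ exp(−|x|/b). Then for any fixed vectors a, a' ∈ ℝᴺ and any Lebesgue-measurable set Y ⊆ ℝᴺ, P(a + w ∈ Y) ≤ exp(‖a − a'‖₁ / b) · P(a' + w ∈ Y). -/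
open MeasureTheory ENNReal

/-- shift inequality for the i.i.d. Laplace product measure. -/
theorem stmt_11 {N : ℕ} (b : ℝ) (hb : 0 < b)
    (ν : Measure (Fin N → ℝ))
    (hν : ν = volume.withDensity
      (fun x : Fin N → ℝ => ENNReal.ofReal (∏ i, (2 * b)⁻¹ * Real.exp (-|x i| / b))))
    (a a' : Fin N → ℝ) (Y : Set (Fin N → ℝ)) (hY : MeasurableSet Y) :
    ν {x | a + x ∈ Y} ≤
      ENNReal.ofReal (Real.exp ((∑ i, |a i - a' i|) / b)) * ν {x | a' + x ∈ Y} := by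
  subst hν
  set f : (Fin N → ℝ) → ℝ≥0∞ :=
    fun x => ENNReal.ofReal (∏ i, (2 * b)⁻¹ * Real.exp (-|x i| / b)) with hf
  have hfm : Measurable f := by
    apply Measurable.ennreal_ofReal
    apply Finset.measurable_prod
    intro i _
    exact (measurable_const.mul
      (Measurable.exp (by fun_prop)))
  have hmA : MeasurableSet {x | a + x ∈ Y} := (measurable_const_add a) hY
  have hmB : MeasurableSet {x | a' + x ∈ Y} := (measurable_const_add a') hY
  have hT : MeasurePreserving (fun y : Fin N → ℝ => y + (a' - a)) volume volume :=
    measurePreserving_add_right volume (a' - a)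
  have hemb : MeasurableEmbedding (fun y : Fin N → ℝ => y + (a' - a)) :=
    (MeasurableEquiv.addRight (a' - a)).measurableEmbedding
  have hpre : (fun y : Fin N → ℝ => y + (a' - a)) ⁻¹' {x | a + x ∈ Y}
      = {x | a' + x ∈ Y} := by
    ext y
    have : a + (y + (a' - a)) = a' + y := by
      funext i; simp [Pi.add_apply, Pi.sub_apply]; ring
    simp [Set.mem_preimage, Set.mem_setOf_eq, this]
  have key : (volume.withDensity f) {x | a + x ∈ Y}
      = ∫⁻ y in {x | a' + x ∈ Y}, f (y + (a' - a)) := by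
    rw [withDensity_apply f hmA, ← hT.setLIntegral_comp_preimage_emb hemb f _, hpre]
  rw [key, withDensity_apply f hmB]
  have hptwise : ∀ y : Fin N → ℝ,
      f (y + (a' - a)) ≤ ENNReal.ofReal (Real.exp ((∑ i, |a i - a' i|) / b)) * f y := by
    intro y
    rw [hf]
    simp only
    rw [← ENNReal.ofReal_mul (Real.exp_nonneg _)]
    apply ENNReal.ofReal_le_ofReal
    rw [Finset.sum_div, Real.exp_sum, ← Finset.prod_mul_distrib]
    apply Finset.prod_le_prod
    · intro i _
      positivity
    · intro i _
      have hb2 : (0:ℝ) < (2*b)⁻¹ := by positivity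
      rw [← mul_assoc, mul_comm (Real.exp (|a i - a' i| / b)) ((2*b)⁻¹), mul_assoc]
      apply mul_le_mul_of_nonneg_left _ hb2.le
      rw [← Real.exp_add]
      apply Real.exp_le_exp.mpr
      rw [Pi.add_apply, Pi.sub_apply]
      rw [← add_div, div_le_div_iff_of_pos_right hb]  -- maybe wrong name
      have h1 : |y i| ≤ |y i + (a' i - a i)| + |a i - a' i| := by
        have := abs_add_le (y i + (a' i - a i)) (a i - a' i)
        simpa using this.trans_eq' (by ring_nf)
      linarith
  calc ∫⁻ y in {x | a' + x ∈ Y}, f (y + (a' - a))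
      ≤ ∫⁻ y in {x | a' + x ∈ Y},
          ENNReal.ofReal (Real.exp ((∑ i, |a i - a' i|) / b)) * f y :=
        lintegral_mono fun y => hptwise y
    _ = ENNReal.ofReal (Real.exp ((∑ i, |a i - a' i|) / b)) *
          ∫⁻ y in {x | a' + x ∈ Y}, f y :=
        lintegral_const_mul _ hfm
end
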